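/- The map Ŝ(x₁,x₂,y₁,y₂,z₁,z₂,t₁,t₂) = (x₁x₂y₁/(x₁x₂+y₂z₁), y₂, (x₁x₂+y₂z₁)/x₂, x₂z₂, y₁y₂z₁/(x₁x₂+y₂z₁), 1, t₁x₂/y₂, t₂z₂) is not involutive: there exists a point p ∈ ℂ⁸ (with all relevant denominators nonzero) such that Ŝ(Ŝ(p)) ≠ p; in fact the first component of Ŝ(Ŝ(x)) equals x₁(x₁x₂+y₂z₁)/(x₂(x₁+z₁z₂)), which generically differs from x₁. -/

import Mathlib

/-- The Hirota-type 4-simplex map `Ŝ` on `ℂ⁸`. -/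
noncomputable def hirotaShat :
    ℂ × ℂ × ℂ × ℂ × ℂ × ℂ × ℂ × ℂ → ℂ × ℂ × ℂ × ℂ × ℂ × ℂ × ℂ × ℂ :=
  fun (x1, x2, y1, y2, z1, z2, t1, t2) =>
    (x1 * x2 * y1 / (x1 * x2 + y2 * z1), y2,
     (x1 * x2 + y2 * z1) / x2, x2 * z2,
     y1 * y2 * z1 / (x1 * x2 + y2 * z1), 1,
     t1 * x2 / y2, t2 * z2)

/-- All denominators occurring in `Ŝ` are nonzero. -/
def hirotaShatOk : ℂ × ℂ × ℂ × ℂ × ℂ × ℂ × ℂ × ℂ → Prop :=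
  fun (x1, x2, _y1, y2, z1, _z2, _t1, _t2) =>
    x1 * x2 + y2 * z1 ≠ 0 ∧ x2 ≠ 0 ∧ y2 ≠ 0

/-- `Ŝ` is not involutive: wherever all denominators are nonzero, the first
component of `Ŝ(Ŝ(x))` equals `x₁(x₁x₂+y₂z₁)/(x₂(x₁+z₁z₂))`, and there is a
point `p` (with all relevant denominators nonzero) with `Ŝ(Ŝ(p)) ≠ p` in the
first coordinate. -/
theorem hirotaShat_noninvolutive :
    (∀ x1 x2 y1 y2 z1 z2 t1 t2 : ℂ,
      hirotaShatOk (x1, x2, y1, y2, z1, z2, t1, t2) →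
      hirotaShatOk (hirotaShat (x1, x2, y1, y2, z1, z2, t1, t2)) →
      (hirotaShat (hirotaShat (x1, x2, y1, y2, z1, z2, t1, t2))).1
        = x1 * (x1 * x2 + y2 * z1) / (x2 * (x1 + z1 * z2))) ∧
    ∃ p : ℂ × ℂ × ℂ × ℂ × ℂ × ℂ × ℂ × ℂ,
      hirotaShatOk p ∧ hirotaShatOk (hirotaShat p) ∧
      (hirotaShat (hirotaShat p)).1 ≠ p.1 := by
  constructor
  · rintro x1 x2 y1 y2 z1 z2 t1 t2 ⟨hd, hx2, hy2⟩ ⟨hd2, hx2', hy2'⟩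
    simp only [hirotaShat, hirotaShatOk] at *
    have hy1 : y1 ≠ 0 := by
      intro h
      apply hd2
      simp [h]
    have hs : x1 + z1 * z2 ≠ 0 := by
      intro h
      apply hd2
      field_simp
      linear_combination x2 * y1 * y2 * h
    have hD : x1 * x2 ^ 2 * y1 * y2 + x2 ^ 2 * y1 * y2 * z1 * z2 ≠ 0 := by
      intro h
      apply mul_ne_zero (mul_ne_zero (mul_ne_zero (pow_ne_zero 2 hx2) hy1) hy2) hs
      linear_combination h
    rw [div_eq_div_iff hd2 (mul_ne_zero hx2 hs)]
    field_simp
  · refine ⟨(1, 1, 1, 1, 1, 2, 1, 1), ?_, ?_, ?_⟩ <;>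
      simp [hirotaShat, hirotaShatOk] <;> norm_num
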